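/- Separately directed implies directed for saturated targets: let (X, dX) be a saturated d-space and let h : I × I → X be a continuous map such that for every t ∈ I the paths s ↦ h(s, t) and s ↦ h(t, s) belong to dX. Then for every continuous map r : I → I × I both of whose coordinate projections are non-decreasing, the composite h ∘ r belongs to dX; in other words, h is a morphism of d-spaces from the product I↑ × I↑ to (X, dX). -/
import Mathlib


open unitInterval Topology Set

/-- Concatenation of two continuous paths `p q : C(I, X)` with `p 1 = q 0`,
traversing `p` on `[0, 1/2]` and `q` on `[1/2, 1]` (both at double speed). -/
noncomputable def concatPath {X : Type*} [TopologicalSpace X]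
    (p q : C(unitInterval, X)) (h : p 1 = q 0) : C(unitInterval, X) :=
  ((⟨p, rfl, rfl⟩ : Path (p 0) (p 1)).trans
    ((⟨q, rfl, rfl⟩ : Path (q 0) (q 1)).cast h rfl)).toContinuousMap

/-- A d-space structure on a topological space `X`: a set of continuous paths
`I → X` containing the constant paths, closed under concatenation and under
precomposition with continuous non-decreasing maps `I → I`. -/
structure DSpace (X : Type*) [TopologicalSpace X] where
  d : Set C(unitInterval, X)
  const_mem : ∀ x : X, ContinuousMap.const unitInterval x ∈ d
  concat_mem : ∀ p ∈ d, ∀ q ∈ d, ∀ h : p 1 = q 0, concatPath p q h ∈ d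
  reparam_mem : ∀ p ∈ d, ∀ φ : C(unitInterval, unitInterval), Monotone ⇑φ → p.comp φ ∈ d

/-- `c` is a directed function on the (open) set `U` for the set of directed
paths `d`: it is continuous on `U` and non-decreasing along every directed path
with image contained in `U`. -/
def IsDirectedFn {X : Type*} [TopologicalSpace X] (d : Set C(unitInterval, X))
    (U : Set X) (c : X → unitInterval) : Prop :=
  ContinuousOn c U ∧ ∀ p ∈ d, Set.range ⇑p ⊆ U → Monotone (c ∘ ⇑p)

/-- A path `p` is weakly directed when, for every directed function `c` on an
open `U`, the map `c ∘ p` is locally non-decreasing on `p ⁻¹' U`. -/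
def IsWeaklyDirected {X : Type*} [TopologicalSpace X] (d : Set C(unitInterval, X))
    (p : C(unitInterval, X)) : Prop :=
  ∀ U : Set X, IsOpen U → ∀ c : X → unitInterval, IsDirectedFn d U c →
    ∀ t : unitInterval, p t ∈ U →
      ∃ V ∈ 𝓝 t, V ⊆ ⇑p ⁻¹' U ∧ MonotoneOn (c ∘ ⇑p) V

/-- The set `d̂X` of weakly directed paths. -/
def satPaths {X : Type*} [TopologicalSpace X] (d : Set C(unitInterval, X)) :
    Set C(unitInterval, X) :=
  {p | IsWeaklyDirected d p}

/-- A set of directed paths is saturated when every weakly directed path is directed. -/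
def IsSaturated {X : Type*} [TopologicalSpace X] (d : Set C(unitInterval, X)) : Prop :=
  satPaths d = d


/-- Along a segment `[a, b]` contained in a directed path `p` whose image on that
segment lies in `U`, any directed function `c` on `U` is non-decreasing. -/
lemma seg_mono {X : Type*} [TopologicalSpace X] (D : DSpace X) {U : Set X}
    {c : X → unitInterval} (hc : IsDirectedFn D.d U c)
    {p : C(unitInterval, X)} (hp : p ∈ D.d) {a b : unitInterval} (hab : a ≤ b)
    (hU : ∀ s : unitInterval, a ≤ s → s ≤ b → p s ∈ U) : c (p a) ≤ c (p b) := by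
  have hab' : (a : ℝ) ≤ b := hab
  have ha0 : (0:ℝ) ≤ a := a.2.1
  have hb1 : (b:ℝ) ≤ 1 := b.2.2
  set φfun : unitInterval → unitInterval := fun s =>
    ⟨(a : ℝ) + s * ((b : ℝ) - a), by
      constructor
      · nlinarith [s.2.1, s.2.2]
      · nlinarith [s.2.1, s.2.2]⟩ with hφdef
  have hφlow : ∀ s : unitInterval, a ≤ φfun s := by
    intro s
    show (a : ℝ) ≤ (a : ℝ) + s * ((b : ℝ) - a)
    nlinarith [s.2.1]
  have hφhigh : ∀ s : unitInterval, φfun s ≤ b := by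
    intro s
    show (a : ℝ) + s * ((b : ℝ) - a) ≤ (b : ℝ)
    nlinarith [s.2.2]
  have hφc : Continuous φfun := by
    apply Continuous.subtype_mk
    fun_prop
  have hφm : Monotone φfun := by
    intro s t hst
    show (a : ℝ) + s * ((b : ℝ) - a) ≤ (a : ℝ) + t * ((b : ℝ) - a)
    have hst' : (s : ℝ) ≤ t := hst
    nlinarith
  have hmem := D.reparam_mem p hp ⟨φfun, hφc⟩ hφm
  have hrange : Set.range ⇑(p.comp ⟨φfun, hφc⟩) ⊆ U := by
    rintro x ⟨s, rfl⟩
    exact hU _ (hφlow s) (hφhigh s)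
  have hmono := hc.2 _ hmem hrange
  have h01 := hmono (show (0:unitInterval) ≤ 1 from unitInterval.nonneg')
  have hz : φfun 0 = a := by
    apply Subtype.ext; simp [hφdef]
  have ho : φfun 1 = b := by
    apply Subtype.ext; simp [hφdef]
  simpa [Function.comp, hz, ho] using h01

/-- Separately directed implies directed for saturated targets: if `(X, dX)` is
saturated and `h : I × I → X` is continuous with all of its horizontal and vertical
sections directed, then `h ∘ r` is directed for every continuous `r : I → I × I`
with non-decreasing coordinate projections, i.e. `h` is a morphism of d-spaces
from `I↑ × I↑` to `(X, dX)`. -/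
theorem stmt_17 {X : Type*} [TopologicalSpace X] (D : DSpace X) (hD : IsSaturated D.d)
    (h : C(unitInterval × unitInterval, X))
    (hsep : ∀ t : unitInterval,
      h.comp (ContinuousMap.mk (fun s => (s, t)) (by fun_prop)) ∈ D.d ∧
      h.comp (ContinuousMap.mk (fun s => (t, s)) (by fun_prop)) ∈ D.d) :
    ∀ r : C(unitInterval, unitInterval × unitInterval),
      Monotone (fun u => (r u).1) → Monotone (fun u => (r u).2) →
        h.comp r ∈ D.d := by
  intro r hr1 hr2
  rw [← hD]
  intro U hUopen c hc t ht
  have hW : ⇑h ⁻¹' U ∈ 𝓝 (r t) :=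
    (hUopen.preimage h.continuous).mem_nhds ht
  rw [mem_nhds_prod_iff] at hW
  obtain ⟨A, hA, B, hB, hAB⟩ := hW
  obtain ⟨a₁, b₁, hmem₁, hnhds₁, hsub₁⟩ := exists_Icc_mem_subset_of_mem_nhds hA
  obtain ⟨a₂, b₂, hmem₂, hnhds₂, hsub₂⟩ := exists_Icc_mem_subset_of_mem_nhds hB
  set R : Set (unitInterval × unitInterval) := Set.Icc a₁ b₁ ×ˢ Set.Icc a₂ b₂ with hRdef
  have hRU : R ⊆ ⇑h ⁻¹' U := fun x hx => hAB ⟨hsub₁ hx.1, hsub₂ hx.2⟩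
  refine ⟨⇑r ⁻¹' R, ?_, ?_, ?_⟩
  · exact r.continuous.continuousAt.preimage_mem_nhds
      (by rw [hRdef, nhds_prod_eq]; exact Filter.prod_mem_prod hnhds₁ hnhds₂)
  · intro u hu
    exact hRU hu
  · intro u hu v hv huv
    obtain ⟨hu1, hu2⟩ := hu
    obtain ⟨hv1, hv2⟩ := hv
    have hx : (r u).1 ≤ (r v).1 := hr1 huv
    have hy : (r u).2 ≤ (r v).2 := hr2 huv
    have step1 : c (h ((r u).1, (r u).2)) ≤ c (h ((r v).1, (r u).2)) := by
      have := seg_mono D hc (hsep (r u).2).1 hx (fun s hs1 hs2 => ?_)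
      · exact this
      · exact hRU ⟨⟨le_trans hu1.1 hs1, le_trans hs2 hv1.2⟩, hu2⟩
    have step2 : c (h ((r v).1, (r u).2)) ≤ c (h ((r v).1, (r v).2)) := by
      have := seg_mono D hc (hsep (r v).1).2 hy (fun s hs1 hs2 => ?_)
      · exact this
      · exact hRU ⟨hv1, ⟨le_trans hu2.1 hs1, le_trans hs2 hv2.2⟩⟩
    calc c ((h.comp r) u) = c (h ((r u).1, (r u).2)) := by simp
      _ ≤ c (h ((r v).1, (r u).2)) := step1
      _ ≤ c (h ((r v).1, (r v).2)) := step2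
      _ = c ((h.comp r) v) := by simp
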